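/- Let W ⊆ ℝⁿ be a linear subspace with orthogonal projection P : ℝⁿ → ℝⁿ onto W. Let h₀ : ℝⁿ → ℝ be continuously differentiable, D₀ ⊆ ℝⁿ open, α : ℝ → ℝ strictly increasing with α(0) = 0, and κ : ℝⁿ → ℝⁿ continuously differentiable with ⟨∇h₀(q), κ(q)⟩ > -α(h₀(q)) for all q ∈ D₀. Assume the underactuation condition: ∇h₀(q) ∈ W for all q ∈ D₀. Let V : ℝⁿ → ℝ be twice continuously differentiable, let ε > 0, define h(q, v) = h₀(q) - (ε/2)‖P(v - κ(q))‖², and define ḣ(q, v, F) = ⟨∇h₀(q), v⟩ + ε⟨P(v - κ(q)), Dκ(q)v + ∇V(q)⟩ - ε⟨F, P(v - κ(q))⟩. Then for every q ∈ D₀ and every v ∈ ℝⁿ there exists F ∈ W such that ḣ(q, v, F) > -α(h(q, v)). -/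

import Mathlib

open scoped RealInnerProductSpace

/-- Euclidean form of the paper's Theorem 2 (backstepping CBF synthesis): for a simple
mechanical control system `v̇ = -∇V(q) + F` with forces `F` in the actuated subspace
`W`, if the safe velocity field `κ` satisfies the strict barrier inequality on `D₀`
and the underactuation condition `∇h₀(q) ∈ W` holds on `D₀`, then at every
`(q, v) ∈ D₀ × ℝⁿ` there exists `F ∈ W` with `ḣ(q, v, F) > -α(h(q, v))`, i.e. the
backstepping candidate `h(q,v) = h₀(q) - (ε/2)‖P(v - κ(q))‖²` is a CBF. -/
theorem stmt_14 (n : ℕ)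
    (W : Submodule ℝ (EuclideanSpace ℝ (Fin n)))
    (P : EuclideanSpace ℝ (Fin n) →L[ℝ] EuclideanSpace ℝ (Fin n))
    (hP : ∀ x, P x = (W.orthogonalProjectionOnto x : EuclideanSpace ℝ (Fin n)))
    (h₀ : EuclideanSpace ℝ (Fin n) → ℝ) (hh₀ : ContDiff ℝ 1 h₀)
    (D₀ : Set (EuclideanSpace ℝ (Fin n))) (hD₀ : IsOpen D₀)
    (α : ℝ → ℝ) (hmono : StrictMono α) (hα0 : α 0 = 0)
    (κ : EuclideanSpace ℝ (Fin n) → EuclideanSpace ℝ (Fin n)) (hκ : ContDiff ℝ 1 κ)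
    (hsafe : ∀ q ∈ D₀, ⟪gradient h₀ q, κ q⟫ > -α (h₀ q))
    (hunder : ∀ q ∈ D₀, gradient h₀ q ∈ W)
    (V : EuclideanSpace ℝ (Fin n) → ℝ) (hV : ContDiff ℝ 2 V)
    (ε : ℝ) (hε : 0 < ε)
    (h : EuclideanSpace ℝ (Fin n) → EuclideanSpace ℝ (Fin n) → ℝ)
    (hdef : ∀ q v, h q v = h₀ q - ε / 2 * ‖P (v - κ q)‖ ^ 2)
    (hdot : EuclideanSpace ℝ (Fin n) → EuclideanSpace ℝ (Fin n) →
      EuclideanSpace ℝ (Fin n) → ℝ)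
    (hdotdef : ∀ q v F, hdot q v F =
      ⟪gradient h₀ q, v⟫
        + ε * ⟪P (v - κ q), fderiv ℝ κ q v + gradient V q⟫
        - ε * ⟪F, P (v - κ q)⟫) :
    ∀ q ∈ D₀, ∀ v : EuclideanSpace ℝ (Fin n),
      ∃ F ∈ W, hdot q v F > -α (h q v) := by

  intro q hq v
  set e := P (v - κ q) with he
  have heW : e ∈ W := by rw [he, hP]; exact (W.orthogonalProjectionOnto (v - κ q)).2
  by_cases hez : e = 0
  · refine ⟨0, W.zero_mem, ?_⟩
    have hperp : v - κ q - e ∈ Wᗮ := by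
      rw [he, hP]; exact Submodule.sub_starProjection_mem_orthogonal (K := W) (v - κ q)
    have h1 : ⟪gradient h₀ q, v - κ q - e⟫ = 0 :=
      (Submodule.mem_orthogonal _ _).1 hperp _ (hunder q hq)
    have hv : ⟪gradient h₀ q, v⟫ = ⟪gradient h₀ q, κ q⟫ := by
      have : ⟪gradient h₀ q, v - κ q⟫ = 0 := by
        rw [hez, sub_zero] at h1; exact h1
      rw [inner_sub_right] at this; linarith
    have hh : h q v = h₀ q := by rw [hdef, ← he, hez]; simp
    rw [hdotdef, ← he, hez, hh]
    simp only [inner_zero_left, inner_zero_right, mul_zero, sub_zero, add_zero]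
    rw [hv]
    exact hsafe q hq
  · have hne : (0:ℝ) < ε * ‖e‖ ^ 2 := by
      have := norm_pos_iff.mpr hez
      positivity
    set A : ℝ := ⟪gradient h₀ q, v⟫ + ε * ⟪e, fderiv ℝ κ q v + gradient V q⟫ with hA
    set T : ℝ := -α (h q v) with hT
    set M : ℝ := (T - A) / (ε * ‖e‖ ^ 2) + 1 with hM
    refine ⟨(-M) • e, W.smul_mem _ heW, ?_⟩
    have hin : ⟪(-M) • e, e⟫ = -M * ‖e‖ ^ 2 := by
      rw [real_inner_smul_left, real_inner_self_eq_norm_sq]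
    rw [hdotdef, ← he, hin, ← hA]
    have hdiv : (T - A) / (ε * ‖e‖ ^ 2) * (ε * ‖e‖ ^ 2) = T - A :=
      div_mul_cancel₀ _ (ne_of_gt hne)
    have : A - ε * (-M * ‖e‖ ^ 2) = A + M * (ε * ‖e‖ ^ 2) := by ring
    rw [this]
    have : M * (ε * ‖e‖ ^ 2) = (T - A) + ε * ‖e‖ ^ 2 := by
      rw [hM]; rw [add_mul, one_mul, hdiv]
    rw [this]
    show A + (T - A + ε * ‖e‖ ^ 2) > T
    linarith
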